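/- arXiv:1501.06598 — 2 statements merged into one kernel-verified Lean document; each statement's English description precedes it below -/
import Mathlib

section
/- Let W be a finite set of real-valued trees of depth n (predictable processes w_t(ε) depending only on ε_1,...,ε_{t-1}), and let η be a [-G,G]-valued tree of depth n. Then E_ε[ max_{w ∈ W} Σ_{t=1}^n ε_t η_t(ε) w_t(ε) ] ≤ G·√(2 log|W| · max_{w ∈ W, ε ∈ {±1}^n} Σ_{t=1}^n w_t(ε)²). -/
open Finset

lemma cosh_bound (r : ℝ) :
    Real.exp ((1:ℝ) * r - r ^ 2 / 2) + Real.exp ((-1:ℝ) * r - r ^ 2 / 2) ≤ 2 := by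
  have h := Real.cosh_le_exp_half_sq r
  rw [Real.cosh_eq] at h
  have e1 : Real.exp ((1:ℝ) * r - r ^ 2 / 2) = Real.exp r / Real.exp (r ^ 2 / 2) := by
    rw [← Real.exp_sub]; ring_nf
  have e2 : Real.exp ((-1:ℝ) * r - r ^ 2 / 2) = Real.exp (-r) / Real.exp (r ^ 2 / 2) := by
    rw [← Real.exp_sub]; ring_nf
  rw [e1, e2, ← add_div, div_le_iff₀ (Real.exp_pos _)]
  linarith

lemma snoc_agree {n : ℕ} (ε' ε'' : Fin n → Bool) (b b' : Bool) (T : Fin (n + 1))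
    (h : ∀ j : Fin n, j.castSucc < T → ε' j = ε'' j) :
    ∀ s : Fin (n + 1), s < T →
      (Fin.snoc ε' b : Fin (n+1) → Bool) s = (Fin.snoc ε'' b' : Fin (n+1) → Bool) s := by
  intro s hs
  have hsl : s ≠ Fin.last n := Fin.ne_last_of_lt (lt_of_lt_of_le hs (Fin.le_last T))
  obtain ⟨j, rfl⟩ := Fin.exists_castSucc_eq.mpr hsl
  rw [Fin.snoc_castSucc, Fin.snoc_castSucc]
  exact h j hs

lemma tree_exp_le : ∀ (n : ℕ) (x : (Fin n → Bool) → Fin n → ℝ),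
    (∀ t : Fin n, ∀ ε ε' : Fin n → Bool, (∀ s : Fin n, s < t → ε s = ε' s) → x ε t = x ε' t) →
    ∑ ε : Fin n → Bool,
      Real.exp (∑ t, ((if ε t then (1 : ℝ) else -1) * x ε t - (x ε t) ^ 2 / 2)) ≤ 2 ^ n := by
  intro n
  induction n with
  | zero => intro x hx; simp
  | succ n ih =>
    intro x hx
    set e : (Fin n → Bool) × Bool ≃ (Fin (n + 1) → Bool) :=
      { toFun := fun p => Fin.snoc p.1 p.2
        invFun := fun ε => (Fin.init ε, ε (Fin.last n))
        left_inv := fun p => by simp [Fin.init_snoc, Fin.snoc_last]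
        right_inv := fun ε => by simp [Fin.snoc_init_self] } with he
    set y : (Fin n → Bool) → Fin n → ℝ :=
      fun ε' t => x (Fin.snoc ε' false) t.castSucc with hy
    set c : (Fin n → Bool) → ℝ := fun ε' => x (Fin.snoc ε' false) (Fin.last n) with hc
    have hypred : ∀ t : Fin n, ∀ ε ε' : Fin n → Bool,
        (∀ s : Fin n, s < t → ε s = ε' s) → y ε t = y ε' t := by
      intro t ε ε' hagree
      apply hx
      apply snoc_agree
      intro j hj
      exact hagree j (by exact_mod_cast hj)
    have key : ∀ (ε' : Fin n → Bool) (b : Bool),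
        Real.exp (∑ t : Fin (n+1), ((if (Fin.snoc ε' b : Fin (n+1) → Bool) t then (1 : ℝ) else -1)
            * x (Fin.snoc ε' b) t - (x (Fin.snoc ε' b) t) ^ 2 / 2))
        = Real.exp (∑ t : Fin n, ((if ε' t then (1 : ℝ) else -1) * y ε' t - (y ε' t) ^ 2 / 2))
          * Real.exp ((if b then (1:ℝ) else -1) * c ε' - (c ε') ^ 2 / 2) := by
      intro ε' b
      rw [← Real.exp_add]
      congr 1
      rw [Fin.sum_univ_castSucc]
      congr 1
      · apply Finset.sum_congr rfl
        intro t _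
        have h1 : x (Fin.snoc ε' b) t.castSucc = y ε' t := by
          apply hx
          exact snoc_agree ε' ε' b false t.castSucc (fun j hj => rfl)
        rw [h1, Fin.snoc_castSucc]
      · have h2 : x (Fin.snoc ε' b) (Fin.last n) = c ε' := by
          apply hx
          exact snoc_agree ε' ε' b false (Fin.last n) (fun j hj => rfl)
        rw [h2, Fin.snoc_last]
    calc ∑ ε : Fin (n+1) → Bool,
          Real.exp (∑ t, ((if ε t then (1 : ℝ) else -1) * x ε t - (x ε t) ^ 2 / 2))
        = ∑ p : (Fin n → Bool) × Bool,
          Real.exp (∑ t, ((if (e p) t then (1 : ℝ) else -1) * x (e p) t - (x (e p) t) ^ 2 / 2)) :=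
          (Equiv.sum_comp e _).symm
      _ = ∑ ε' : Fin n → Bool, ∑ b : Bool,
          Real.exp (∑ t : Fin n, ((if ε' t then (1 : ℝ) else -1) * y ε' t - (y ε' t) ^ 2 / 2))
          * Real.exp ((if b then (1:ℝ) else -1) * c ε' - (c ε') ^ 2 / 2) := by
          rw [Fintype.sum_prod_type]
          exact Finset.sum_congr rfl fun ε' _ => Finset.sum_congr rfl fun b _ => key ε' b
      _ ≤ ∑ ε' : Fin n → Bool,
          Real.exp (∑ t : Fin n, ((if ε' t then (1 : ℝ) else -1) * y ε' t - (y ε' t) ^ 2 / 2)) * 2 := by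
          apply Finset.sum_le_sum
          intro ε' _
          rw [Fintype.sum_bool, ← mul_add]
          apply mul_le_mul_of_nonneg_left _ (Real.exp_nonneg _)
          simpa using cosh_bound (c ε')
      _ ≤ 2 ^ n * 2 := by
          rw [← Finset.sum_mul]
          exact mul_le_mul_of_nonneg_right (ih y hypred) (by norm_num)
      _ = 2 ^ (n + 1) := by ring

lemma abstract_master {n : ℕ} {α : Type*} (W : Finset α) (hW : W.Nonempty)
    (F : α → (Fin n → Bool) → ℝ) (l K : ℝ) (hl : 0 < l)
    (mgf : ∀ w ∈ W, ∑ ε : Fin n → Bool, Real.exp (l * F w ε) ≤ 2 ^ n * Real.exp K) :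
    (∑ ε : Fin n → Bool, W.sup' hW fun w => F w ε) / 2 ^ n
      ≤ (Real.log W.card + K) / l := by
  classical
  have h2n : (0:ℝ) < 2 ^ n := by positivity
  have hWcard : (0:ℝ) < W.card := by exact_mod_cast Finset.card_pos.mpr hW
  set S := (∑ ε : Fin n → Bool, W.sup' hW fun w => F w ε) / 2 ^ n with hSdef
  have hcard2 : Fintype.card (Fin n → Bool) = 2 ^ n := by simp
  have hsum1 : ∑ _ε : Fin n → Bool, ((2:ℝ) ^ n)⁻¹ = 1 := by
    rw [Finset.sum_const, Finset.card_univ, hcard2, nsmul_eq_mul]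
    push_cast
    exact mul_inv_cancel₀ (by positivity)
  have e1 : l * S = ∑ ε : Fin n → Bool,
      ((2:ℝ) ^ n)⁻¹ • (l * W.sup' hW fun w => F w ε) := by
    simp only [smul_eq_mul, inv_mul_eq_div]
    rw [← Finset.sum_div, ← Finset.mul_sum, hSdef, mul_div_assoc]
  have jensen : Real.exp (l * S) ≤ (∑ ε : Fin n → Bool,
      Real.exp (l * W.sup' hW fun w => F w ε)) / 2 ^ n := by
    rw [e1]
    have hj := convexOn_exp.map_sum_le (t := (Finset.univ : Finset (Fin n → Bool)))
      (w := fun _ => ((2:ℝ) ^ n)⁻¹)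
      (p := fun ε => l * W.sup' hW fun w => F w ε)
      (fun _ _ => by positivity) hsum1 (fun _ _ => Set.mem_univ _)
    refine hj.trans_eq ?_
    simp only [smul_eq_mul, inv_mul_eq_div]
    rw [← Finset.sum_div]
  have sup_le : ∀ ε : Fin n → Bool,
      Real.exp (l * W.sup' hW fun w => F w ε) ≤ ∑ w ∈ W, Real.exp (l * F w ε) := by
    intro ε
    obtain ⟨w1, hw1, hmax⟩ := Finset.exists_mem_eq_sup' hW (fun w => F w ε)
    rw [hmax]
    exact Finset.single_le_sum (f := fun w => Real.exp (l * F w ε))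
      (fun w _ => (Real.exp_pos _).le) hw1
  have chain : Real.exp (l * S) ≤ W.card * Real.exp K := by
    calc Real.exp (l * S)
        ≤ (∑ ε : Fin n → Bool, Real.exp (l * W.sup' hW fun w => F w ε)) / 2 ^ n := jensen
      _ ≤ (∑ ε : Fin n → Bool, ∑ w ∈ W, Real.exp (l * F w ε)) / 2 ^ n := by
          gcongr with ε hε
          exact sup_le ε
      _ = (∑ w ∈ W, ∑ ε : Fin n → Bool, Real.exp (l * F w ε)) / 2 ^ n := by
          rw [Finset.sum_comm]
      _ ≤ (∑ _w ∈ W, 2 ^ n * Real.exp K) / 2 ^ n := by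
          gcongr with w hw
          exact mgf w hw
      _ = W.card * Real.exp K := by
          rw [Finset.sum_const, nsmul_eq_mul]
          field_simp
  have hlog : l * S ≤ Real.log W.card + K := by
    have hl2 := Real.log_le_log (Real.exp_pos _) chain
    rwa [Real.log_exp, Real.log_mul (ne_of_gt hWcard) (Real.exp_ne_zero _),
      Real.log_exp] at hl2
  rw [le_div_iff₀ hl]
  nlinarith [hlog]

lemma abstract_opt (S L c : ℝ) (hL : 0 ≤ L) (hc : 0 ≤ c)
    (master : ∀ l : ℝ, 0 < l → S ≤ (L + l ^ 2 * c / 2) / l) :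
    S ≤ Real.sqrt (2 * L * c) := by
  apply _root_.le_of_forall_pos_le_add
  intro δ hδ
  rcases eq_or_lt_of_le hc with hc0 | hc0
  · have hm := master ((L + 1) / δ) (by positivity)
    rw [← hc0] at hm
    have e : (L + ((L + 1) / δ) ^ 2 * 0 / 2) / ((L + 1) / δ) = L * δ / (L + 1) := by
      rw [mul_zero, zero_div, add_zero, div_div_eq_mul_div]
    rw [e] at hm
    have h1 : L * δ / (L + 1) ≤ δ := by
      rw [div_le_iff₀ (by positivity)]
      nlinarith
    nlinarith [Real.sqrt_nonneg (2 * L * c)]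
  · set B := Real.sqrt (2 * L * c) with hBdef
    have hB : 0 ≤ B := Real.sqrt_nonneg _
    have hBsq : B ^ 2 = 2 * L * c := Real.sq_sqrt (by positivity)
    have hBδ : 0 < B + δ := by linarith
    have hm := master ((B + δ) / c) (div_pos hBδ hc0)
    have h1 : (L + ((B + δ) / c) ^ 2 * c / 2) / ((B + δ) / c) ≤ B + δ := by
      rw [div_div_eq_mul_div, div_le_iff₀ (by positivity)]
      have key : (L + ((B + δ) / c) ^ 2 * c / 2) * c = L * c + (B + δ) ^ 2 / 2 := by
        field_simp
      rw [key]
      nlinarith [hBsq]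
    linarith [hm, h1]

set_option maxHeartbeats 1000000 in
/-- Maximal inequality for sequential Rademacher averages over a finite set of
predictable trees, with a [−G,G]-valued multiplier tree η:
E max_{w∈W} Σ_t ε_t η_t(ε) w_t(ε) ≤ G √(2 log|W| · max_{w,ε} Σ_t w_t(ε)²). -/
theorem finite_class_maximal_inequality {n : ℕ}
    (W : Finset ((Fin n → Bool) → Fin n → ℝ)) (hW : W.Nonempty)
    (hpred : ∀ w ∈ W, ∀ t : Fin n, ∀ ε ε' : Fin n → Bool,
      (∀ s : Fin n, s < t → ε s = ε' s) → w ε t = w ε' t)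
    (G : ℝ) (η : (Fin n → Bool) → Fin n → ℝ)
    (hη : ∀ ε t, |η ε t| ≤ G)
    (hηpred : ∀ t : Fin n, ∀ ε ε' : Fin n → Bool,
      (∀ s : Fin n, s < t → ε s = ε' s) → η ε t = η ε' t) :
    (∑ ε : Fin n → Bool,
        W.sup' hW fun w => ∑ t, (if ε t then (1 : ℝ) else -1) * η ε t * w ε t) / 2 ^ n
      ≤ G * Real.sqrt (2 * Real.log W.card *
          (W.sup' hW fun w =>
            Finset.univ.sup' Finset.univ_nonempty
              fun ε : Fin n → Bool => ∑ t, (w ε t) ^ 2)) := by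
  classical
  rcases Nat.eq_zero_or_pos n with hn | hn
  · subst hn
    simp [Finset.sup'_const]
  obtain ⟨w0, hw0⟩ := id hW
  have hG : 0 ≤ G := le_trans (abs_nonneg _) (hη (fun _ => false) ⟨0, hn⟩)
  set L := Real.log W.card with hLdef
  set R2 := W.sup' hW (fun w => Finset.univ.sup' Finset.univ_nonempty
      fun ε : Fin n → Bool => ∑ t, (w ε t) ^ 2) with hR2def
  set S := (∑ ε : Fin n → Bool,
      W.sup' hW fun w => ∑ t, (if ε t then (1 : ℝ) else -1) * η ε t * w ε t) / 2 ^ n with hSdef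
  have hR2nn : (0:ℝ) ≤ R2 := by
    rw [hR2def]
    have h1 : (0:ℝ) ≤ ∑ t, (w0 (fun _ => false) t) ^ 2 :=
      Finset.sum_nonneg fun t _ => sq_nonneg _
    have h2 := Finset.le_sup' (f := fun ε : Fin n → Bool => ∑ t, (w0 ε t) ^ 2)
      (Finset.mem_univ (fun _ => false))
    have h3 := Finset.le_sup'
      (f := fun w : (Fin n → Bool) → Fin n → ℝ =>
        Finset.univ.sup' Finset.univ_nonempty fun ε : Fin n → Bool => ∑ t, (w ε t) ^ 2) hw0
    exact le_trans h1 (le_trans h2 h3)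
  have hLnn : 0 ≤ L := Real.log_nonneg (by exact_mod_cast Finset.card_pos.mpr (id hW))
  have hc : 0 ≤ G ^ 2 * R2 := mul_nonneg (sq_nonneg G) hR2nn
  have master : ∀ l : ℝ, 0 < l → S ≤ (L + l ^ 2 * (G ^ 2 * R2) / 2) / l := by
    intro l hl
    have mgf : ∀ w ∈ W, ∑ ε : Fin n → Bool,
        Real.exp (l * ∑ t, (if ε t then (1:ℝ) else -1) * η ε t * w ε t)
        ≤ 2 ^ n * Real.exp (l ^ 2 * (G ^ 2 * R2) / 2) := by
      intro w hw
      have hxpred : ∀ t : Fin n, ∀ ε ε' : Fin n → Bool, (∀ s : Fin n, s < t → ε s = ε' s) →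
          l * (η ε t * w ε t) = l * (η ε' t * w ε' t) := by
        intro t ε ε' h; rw [hηpred t ε ε' h, hpred w hw t ε ε' h]
      have key := tree_exp_le n (fun ε t => l * (η ε t * w ε t)) hxpred
      have hb : ∀ ε : Fin n → Bool,
          Real.exp (l * ∑ t, (if ε t then (1:ℝ) else -1) * η ε t * w ε t)
          ≤ Real.exp (∑ t, ((if ε t then (1:ℝ) else -1) * (l * (η ε t * w ε t))
              - (l * (η ε t * w ε t)) ^ 2 / 2)) * Real.exp (l ^ 2 * (G ^ 2 * R2) / 2) := by
        intro ε
        rw [← Real.exp_add, Real.exp_le_exp]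
        have hsumR : ∑ t, (w ε t) ^ 2 ≤ R2 := by
          rw [hR2def]
          exact le_trans
            (Finset.le_sup' (f := fun ε : Fin n → Bool => ∑ t, (w ε t) ^ 2)
              (Finset.mem_univ ε))
            (Finset.le_sup'
              (f := fun w : (Fin n → Bool) → Fin n → ℝ =>
                Finset.univ.sup' Finset.univ_nonempty
                  fun ε : Fin n → Bool => ∑ t, (w ε t) ^ 2) hw)
        have hsum2 : ∑ t, (l * (η ε t * w ε t)) ^ 2 ≤ l ^ 2 * G ^ 2 * ∑ t, (w ε t) ^ 2 := by
          rw [Finset.mul_sum]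
          apply Finset.sum_le_sum
          intro t _
          have h1 := abs_le.mp (hη ε t)
          have hη2 : (η ε t) ^ 2 ≤ G ^ 2 := sq_le_sq' (by linarith [h1.1]) h1.2
          calc (l * (η ε t * w ε t)) ^ 2 = l ^ 2 * ((η ε t) ^ 2 * (w ε t) ^ 2) := by ring
            _ ≤ l ^ 2 * (G ^ 2 * (w ε t) ^ 2) :=
                mul_le_mul_of_nonneg_left
                  (mul_le_mul_of_nonneg_right hη2 (sq_nonneg _)) (sq_nonneg l)
            _ = l ^ 2 * G ^ 2 * (w ε t) ^ 2 := by ring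
        have hx : l * ∑ t, (if ε t then (1:ℝ) else -1) * η ε t * w ε t
            = ∑ t, (if ε t then (1:ℝ) else -1) * (l * (η ε t * w ε t)) := by
          rw [Finset.mul_sum]; exact Finset.sum_congr rfl fun t _ => by ring
        rw [hx, Finset.sum_sub_distrib]
        have hhalf : ∑ t, (l * (η ε t * w ε t)) ^ 2 / 2 ≤ l ^ 2 * (G ^ 2 * R2) / 2 := by
          rw [← Finset.sum_div]
          have h3 : l ^ 2 * G ^ 2 * ∑ t, (w ε t) ^ 2 ≤ l ^ 2 * (G ^ 2 * R2) := by
            calc l ^ 2 * G ^ 2 * ∑ t, (w ε t) ^ 2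
                ≤ l ^ 2 * G ^ 2 * R2 :=
                  mul_le_mul_of_nonneg_left hsumR
                    (mul_nonneg (sq_nonneg l) (sq_nonneg G))
              _ = l ^ 2 * (G ^ 2 * R2) := by ring
          linarith
        linarith
      calc ∑ ε : Fin n → Bool,
            Real.exp (l * ∑ t, (if ε t then (1:ℝ) else -1) * η ε t * w ε t)
          ≤ ∑ ε : Fin n → Bool,
            Real.exp (∑ t, ((if ε t then (1:ℝ) else -1) * (l * (η ε t * w ε t))
              - (l * (η ε t * w ε t)) ^ 2 / 2)) * Real.exp (l ^ 2 * (G ^ 2 * R2) / 2) :=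
            Finset.sum_le_sum fun ε _ => hb ε
        _ = (∑ ε : Fin n → Bool,
            Real.exp (∑ t, ((if ε t then (1:ℝ) else -1) * (l * (η ε t * w ε t))
              - (l * (η ε t * w ε t)) ^ 2 / 2))) * Real.exp (l ^ 2 * (G ^ 2 * R2) / 2) :=
            (Finset.sum_mul _ _ _).symm
        _ ≤ 2 ^ n * Real.exp (l ^ 2 * (G ^ 2 * R2) / 2) :=
            mul_le_mul_of_nonneg_right key (Real.exp_nonneg _)
    exact abstract_master W hW
      (fun w ε => ∑ t, (if ε t then (1 : ℝ) else -1) * η ε t * w ε t)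
      l (l ^ 2 * (G ^ 2 * R2) / 2) hl mgf
  have final : S ≤ Real.sqrt (2 * L * (G ^ 2 * R2)) :=
    abstract_opt S L (G ^ 2 * R2) hLnn hc master
  have heq : Real.sqrt (2 * L * (G ^ 2 * R2)) = G * Real.sqrt (2 * L * R2) := by
    rw [show 2 * L * (G ^ 2 * R2) = G ^ 2 * (2 * L * R2) by ring,
      Real.sqrt_mul (sq_nonneg G), Real.sqrt_sq hG]
  calc S ≤ Real.sqrt (2 * L * (G ^ 2 * R2)) := final
    _ = G * Real.sqrt (2 * L * R2) := heq
end

section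
/- In the special case Δ(x) = x², for any finite set W of real-valued trees of depth n and any C > 0: E_ε[ max_{w ∈ W} Σ_{t=1}^n (2C ε_t w_t(ε) - w_t(ε)²) ] ≤ 2C² log|W|. -/
open Finset

/-- Sum over the hypercube equals half the sum of the two coordinate-fixings. -/
lemma pair_sum_aux {n : ℕ} (F : (Fin n → Bool) → ℝ) (k : Fin n) :
    ∑ ε : Fin n → Bool, F ε
      = (∑ ε : Fin n → Bool,
          (F (Function.update ε k true) + F (Function.update ε k false))) / 2 := by
  have inv : Function.Involutive
      (fun ε : Fin n → Bool => Function.update ε k (!ε k)) := by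
    intro ε
    funext t
    by_cases h : t = k
    · subst h; simp
    · simp [Function.update_of_ne h]
  have h1 : ∀ ε : Fin n → Bool,
      F (Function.update ε k true) + F (Function.update ε k false)
        = F ε + F (Function.update ε k (!ε k)) := by
    intro ε
    cases hb : ε k with
    | true =>
      have h2 : Function.update ε k true = ε := by
        conv_lhs => rw [← hb]
        exact Function.update_eq_self k ε
      rw [h2]
      simp
    | false =>
      have h2 : Function.update ε k false = ε := by
        conv_lhs => rw [← hb]
        exact Function.update_eq_self k ε
      rw [h2]
      simp [add_comm]
  have h3 : ∑ ε : Fin n → Bool, F (Function.update ε k (!ε k))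
      = ∑ ε : Fin n → Bool, F ε :=
    Fintype.sum_equiv (Function.Involutive.toPerm _ inv)
      (fun ε => F (Function.update ε k (!ε k))) F (fun ε => rfl)
  rw [Finset.sum_congr rfl (fun ε _ => h1 ε), Finset.sum_add_distrib, h3]
  ring

/-- MGF bound for a single predictable tree at λ = 1/(2C²). -/
lemma tree_mgf_aux {n : ℕ} (w : (Fin n → Bool) → Fin n → ℝ)
    (hpred : ∀ t : Fin n, ∀ ε ε' : Fin n → Bool,
      (∀ s : Fin n, s < t → ε s = ε' s) → w ε t = w ε' t)
    (C : ℝ) (hC : 0 < C) :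
    ∑ ε : Fin n → Bool,
      Real.exp ((1/(2*C^2)) *
        ∑ t, (2 * C * (if ε t then (1 : ℝ) else -1) * w ε t - (w ε t) ^ 2))
      ≤ 2 ^ n := by
  set L : ℝ := 1/(2*C^2) with hLdef
  have hL : 0 < L := by positivity
  have hLC : 2 * L * C ^ 2 = 1 := by
    rw [hLdef]; field_simp
  set g : (Fin n → Bool) → Fin n → ℝ :=
    fun ε t => 2 * C * (if ε t then (1 : ℝ) else -1) * w ε t - (w ε t) ^ 2 with hg
  set S : ℕ → (Fin n → Bool) → ℝ :=
    fun k ε => ∑ t : Fin n, if (t : ℕ) < k then L * g ε t else 0 with hS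
  have key : ∀ k, ∑ ε : Fin n → Bool, Real.exp (S k ε) ≤ 2 ^ n := by
    intro k
    induction k with
    | zero =>
      have : ∀ ε : Fin n → Bool, S 0 ε = 0 := by
        intro ε; simp [hS]
      simp only [this, Real.exp_zero]
      simp [Finset.card_univ]
    | succ k ih =>
      by_cases hk : k < n
      · set t₀ : Fin n := ⟨k, hk⟩ with ht₀
        have ht₀v : (t₀ : ℕ) = k := rfl
        have hagree : ∀ (ε : Fin n → Bool) (b : Bool) (t : Fin n), (t : ℕ) ≤ k →
            w (Function.update ε t₀ b) t = w ε t := by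
          intro ε b t ht
          apply hpred t
          intro s hs
          have hsv : (s : ℕ) < (t : ℕ) := hs
          have : s ≠ t₀ := by
            intro hst
            rw [hst, ht₀v] at hsv
            omega
          exact Function.update_of_ne this b ε
        have hSinv : ∀ (ε : Fin n → Bool) (b : Bool),
            S k (Function.update ε t₀ b) = S k ε := by
          intro ε b
          apply Finset.sum_congr rfl
          intro t _
          by_cases ht : (t : ℕ) < k
          · rw [if_pos ht, if_pos ht]
            have htne : t ≠ t₀ := by
              intro h; rw [h, ht₀v] at ht; omega
            have h1 : Function.update ε t₀ b t = ε t := Function.update_of_ne htne b ε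
            have h2 : w (Function.update ε t₀ b) t = w ε t := hagree ε b t (le_of_lt ht)
            simp only [hg, h1, h2]
          · rw [if_neg ht, if_neg ht]
        have hstep : ∀ ε, S (k+1) ε = S k ε + L * g ε t₀ := by
          intro ε
          have hsplit : ∀ t : Fin n,
              (if (t : ℕ) < k + 1 then L * g ε t else 0)
                = (if (t : ℕ) < k then L * g ε t else 0)
                  + (if t = t₀ then L * g ε t else 0) := by
            intro t
            by_cases h1 : (t : ℕ) < k
            · have h2 : t ≠ t₀ := by
                intro h; rw [h, ht₀v] at h1; omega
              rw [if_pos (Nat.lt_succ_of_lt h1), if_pos h1, if_neg h2, add_zero]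
            · by_cases h2 : t = t₀
              · have : (t : ℕ) < k + 1 := by rw [h2, ht₀v]; omega
                rw [if_pos this, if_neg h1, if_pos h2, zero_add]
              · have : ¬ (t : ℕ) < k + 1 := by
                  intro h
                  have hv : (t : ℕ) = k := by omega
                  exact h2 (Fin.ext (by rw [hv, ht₀v]))
                rw [if_neg this, if_neg h1, if_neg h2, add_zero]
          rw [hS]
          simp only [hsplit, Finset.sum_add_distrib]
          rw [Finset.sum_ite_eq' Finset.univ t₀ (fun t => L * g ε t)]
          simp
        have hpair : ∀ ε : Fin n → Bool,
            Real.exp (S (k+1) (Function.update ε t₀ true))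
              + Real.exp (S (k+1) (Function.update ε t₀ false))
              ≤ 2 * Real.exp (S k ε) := by
          intro ε
          set a : ℝ := w (Function.update ε t₀ true) t₀ with ha
          have haf : w (Function.update ε t₀ false) t₀ = a := by
            rw [ha]
            apply hpred t₀
            intro s hs
            have hsne : s ≠ t₀ := ne_of_lt hs
            rw [Function.update_of_ne hsne, Function.update_of_ne hsne]
          have hgt : g (Function.update ε t₀ true) t₀ = 2 * C * a - a ^ 2 := by
            simp [hg, Function.update_self, ha]
          have hgf : g (Function.update ε t₀ false) t₀ = -(2 * C * a) - a ^ 2 := by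
            simp only [hg, Function.update_self, haf, Bool.false_eq_true, if_false]
            ring
          rw [hstep, hstep, hSinv, hSinv, hgt, hgf, Real.exp_add, Real.exp_add,
            ← mul_add, mul_comm (2 : ℝ) (Real.exp (S k ε))]
          apply mul_le_mul_of_nonneg_left _ (Real.exp_nonneg _)
          have hx : L * (2 * C * a - a ^ 2) = (2 * L * C * a) - L * a ^ 2 := by ring
          have hy : L * (-(2 * C * a) - a ^ 2) = -(2 * L * C * a) - L * a ^ 2 := by ring
          rw [hx, hy, Real.exp_sub, Real.exp_sub, ← add_div,
            div_le_iff₀ (Real.exp_pos _)]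
          have hcosh : Real.exp (2 * L * C * a) + Real.exp (-(2 * L * C * a))
              = 2 * Real.cosh (2 * L * C * a) := by
            rw [Real.cosh_eq]; ring
          rw [hcosh]
          have hb : Real.cosh (2 * L * C * a) ≤ Real.exp ((2 * L * C * a) ^ 2 / 2) :=
            Real.cosh_le_exp_half_sq _
          have heq : (2 * L * C * a) ^ 2 / 2 = L * a ^ 2 := by
            have h0 : (2 * L * C * a) ^ 2 / 2 = (2 * L * C ^ 2) * (L * a ^ 2) := by ring
            rw [h0, hLC, one_mul]
          rw [heq] at hb
          linarith
        calc ∑ ε : Fin n → Bool, Real.exp (S (k+1) ε)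
            = (∑ ε : Fin n → Bool,
                (Real.exp (S (k+1) (Function.update ε t₀ true))
                  + Real.exp (S (k+1) (Function.update ε t₀ false)))) / 2 :=
              pair_sum_aux (fun ε => Real.exp (S (k+1) ε)) t₀
          _ ≤ (∑ ε : Fin n → Bool, 2 * Real.exp (S k ε)) / 2 := by
              apply div_le_div_of_nonneg_right _ (by norm_num)
              exact Finset.sum_le_sum (fun ε _ => hpair ε)
          _ = ∑ ε : Fin n → Bool, Real.exp (S k ε) := by
              rw [← Finset.mul_sum]; ring
          _ ≤ 2 ^ n := ih
      · have heq : ∀ ε, S (k+1) ε = S k ε := by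
          intro ε
          apply Finset.sum_congr rfl
          intro t _
          have h1 : (t : ℕ) < k := lt_of_lt_of_le t.isLt (le_of_not_gt hk)
          rw [if_pos h1, if_pos (Nat.lt_succ_of_lt h1)]
        simp only [heq]
        exact ih
  have hfinal : ∀ ε : Fin n → Bool,
      L * ∑ t, (2 * C * (if ε t then (1 : ℝ) else -1) * w ε t - (w ε t) ^ 2) = S n ε := by
    intro ε
    rw [hS, Finset.mul_sum]
    apply Finset.sum_congr rfl
    intro t _
    rw [if_pos t.isLt]
  calc ∑ ε : Fin n → Bool,
        Real.exp (L * ∑ t, (2 * C * (if ε t then (1 : ℝ) else -1) * w ε t - (w ε t) ^ 2))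
      = ∑ ε : Fin n → Bool, Real.exp (S n ε) := by
        apply Finset.sum_congr rfl; intro ε _; rw [hfinal]
    _ ≤ 2 ^ n := key n

set_option maxHeartbeats 1000000 in
/-- Offset maximal inequality, square case Δ(x) = x²:
E max_{w∈W} Σ_t (2Cε_t w_t(ε) − w_t(ε)²) ≤ 2C² log|W|. -/
theorem offset_maximal_inequality_square {n : ℕ}
    (W : Finset ((Fin n → Bool) → Fin n → ℝ)) (hW : W.Nonempty)
    (hpred : ∀ w ∈ W, ∀ t : Fin n, ∀ ε ε' : Fin n → Bool,
      (∀ s : Fin n, s < t → ε s = ε' s) → w ε t = w ε' t)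
    (C : ℝ) (hC : 0 < C) :
    (∑ ε : Fin n → Bool,
        W.sup' hW fun w =>
          ∑ t, (2 * C * (if ε t then (1 : ℝ) else -1) * w ε t - (w ε t) ^ 2)) / 2 ^ n
      ≤ 2 * C ^ 2 * Real.log W.card := by
  set L : ℝ := 1/(2*C^2) with hLdef
  have hL : 0 < L := by positivity
  set M : (Fin n → Bool) → ℝ := fun ε =>
    W.sup' hW fun w =>
      ∑ t, (2 * C * (if ε t then (1 : ℝ) else -1) * w ε t - (w ε t) ^ 2) with hM
  have hunion : ∑ ε : Fin n → Bool, Real.exp (L * M ε) ≤ (W.card : ℝ) * 2 ^ n := by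
    have hptw : ∀ ε : Fin n → Bool, Real.exp (L * M ε)
        ≤ ∑ w ∈ W, Real.exp (L *
            ∑ t, (2 * C * (if ε t then (1 : ℝ) else -1) * w ε t - (w ε t) ^ 2)) := by
      intro ε
      obtain ⟨w₀, hw₀, hMeq⟩ := Finset.exists_mem_eq_sup' hW
        (fun w => ∑ t, (2 * C * (if ε t then (1 : ℝ) else -1) * w ε t - (w ε t) ^ 2))
      have hMe : M ε = ∑ t, (2 * C * (if ε t then (1 : ℝ) else -1) * w₀ ε t - (w₀ ε t) ^ 2) := by
        simp only [hM]
        exact hMeq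
      rw [hMe]
      apply Finset.single_le_sum ?_ hw₀
      intro w _
      exact Real.exp_nonneg _
    calc ∑ ε : Fin n → Bool, Real.exp (L * M ε)
        ≤ ∑ ε : Fin n → Bool, ∑ w ∈ W, Real.exp (L *
            ∑ t, (2 * C * (if ε t then (1 : ℝ) else -1) * w ε t - (w ε t) ^ 2)) :=
          Finset.sum_le_sum (fun ε _ => hptw ε)
      _ = ∑ w ∈ W, ∑ ε : Fin n → Bool, Real.exp (L *
            ∑ t, (2 * C * (if ε t then (1 : ℝ) else -1) * w ε t - (w ε t) ^ 2)) :=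
          Finset.sum_comm
      _ ≤ ∑ _w ∈ W, (2 : ℝ) ^ n :=
          Finset.sum_le_sum (fun w hw => tree_mgf_aux w (hpred w hw) C hC)
      _ = (W.card : ℝ) * 2 ^ n := by rw [Finset.sum_const, nsmul_eq_mul]
  have hcard : (Finset.univ : Finset (Fin n → Bool)).card = 2 ^ n := by
    simp [Finset.card_univ]
  have h2n : (0:ℝ) < 2 ^ n := by positivity
  have hjensen : Real.exp (L * ((∑ ε : Fin n → Bool, M ε) / 2 ^ n))
      ≤ (∑ ε : Fin n → Bool, Real.exp (L * M ε)) / 2 ^ n := by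
    have hjj := convexOn_exp.map_sum_le (t := (Finset.univ : Finset (Fin n → Bool)))
      (w := fun _ => (1 : ℝ) / 2 ^ n) (p := fun ε => L * M ε)
      (fun _ _ => by positivity)
      (by rw [Finset.sum_const, hcard, nsmul_eq_mul]; push_cast; field_simp)
      (fun _ _ => Set.mem_univ _)
    convert hjj using 2
    · rfl
    · simp only [smul_eq_mul, one_div, inv_mul_eq_div, ← Finset.sum_div, ← Finset.mul_sum]
      ring
    · simp only [smul_eq_mul, one_div, inv_mul_eq_div, ← Finset.sum_div]
  have hcard1 : (1 : ℝ) ≤ (W.card : ℝ) := by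
    exact_mod_cast Finset.card_pos.mpr hW
  have hcardpos : (0 : ℝ) < (W.card : ℝ) := lt_of_lt_of_le one_pos hcard1
  have hmain : L * ((∑ ε : Fin n → Bool, M ε) / 2 ^ n) ≤ Real.log W.card := by
    rw [Real.le_log_iff_exp_le hcardpos]
    calc Real.exp (L * ((∑ ε : Fin n → Bool, M ε) / 2 ^ n))
        ≤ (∑ ε : Fin n → Bool, Real.exp (L * M ε)) / 2 ^ n := hjensen
      _ ≤ ((W.card : ℝ) * 2 ^ n) / 2 ^ n := by
          gcongr
      _ = (W.card : ℝ) := by field_simp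
  have hrw : (2 * C ^ 2) * L = 1 := by rw [hLdef]; field_simp
  calc (∑ ε : Fin n → Bool, M ε) / 2 ^ n
      = (2 * C ^ 2) * (L * ((∑ ε : Fin n → Bool, M ε) / 2 ^ n)) := by
        rw [← mul_assoc, hrw, one_mul]
    _ ≤ 2 * C ^ 2 * Real.log W.card := by
        apply mul_le_mul_of_nonneg_left hmain (by positivity)
end
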